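/- In the rank protocol with rule (k,k) → (k, min(k+1,n₀)) started from the all-zero configuration with n < n₀ agents on a complete graph: the configuration assigning the n distinct ranks 0, 1, …, n−1 to the n agents (in any order) is reachable, and it is stable (no transition changes it). -/
import Mathlib


/-- One step of the rank protocol with states `{0,…,n₀}`: two distinct agents with the
same rank `k` interact and the responder moves to rank `min (k+1) n₀`; interactions of
agents with different ranks change nothing. -/
def RStep (n₀ : ℕ) {n : ℕ} (C C' : Fin n → ℕ) : Prop :=
  ∃ i r : Fin n, i ≠ r ∧ C i = C r ∧ C' = Function.update C r (min (C i + 1) n₀)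

/-- A configuration is stable if no applicable step changes it. -/
def RStable (n₀ : ℕ) {n : ℕ} (C : Fin n → ℕ) : Prop :=
  ∀ C', RStep n₀ C C' → C' = C

/-- An execution: each step is either a protocol step or leaves the configuration
unchanged. -/
def RExec (n₀ : ℕ) {n : ℕ} (e : ℕ → Fin n → ℕ) : Prop :=
  ∀ k, RStep n₀ (e k) (e (k + 1)) ∨ e (k + 1) = e k

/-- Global fairness: any configuration reachable in one step from a configuration
occurring infinitely often itself occurs infinitely often. -/
def RFair (n₀ : ℕ) {n : ℕ} (e : ℕ → Fin n → ℕ) : Prop :=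
  ∀ C C', (∀ N, ∃ k ≥ N, e k = C) → RStep n₀ C C' → ∀ N, ∃ k ≥ N, e k = C'

/-- For `n < n₀` agents, any configuration assigning the `n` distinct ranks
`0, 1, …, n−1` (in any order) is reachable from the all-zero configuration,
and it is stable. -/
theorem rank_distinct_reachable_stable (n₀ n : ℕ) (hn : 1 ≤ n) (hnn₀ : n < n₀)
    (C : Fin n → ℕ) (hinj : Function.Injective C) (hlt : ∀ i, C i < n) :
    Relation.ReflTransGen (RStep n₀) (fun _ => 0) C ∧ RStable n₀ C := by
  have hsurj : ∀ v, v < n → ∃ i : Fin n, C i = v := by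
    intro v hv
    have hf : Function.Injective (fun i : Fin n => (⟨C i, hlt i⟩ : Fin n)) := by
      intro a b h
      exact hinj (congrArg Fin.val h)
    have hs : Function.Surjective (fun i : Fin n => (⟨C i, hlt i⟩ : Fin n)) :=
      Finite.surjective_of_injective hf
    obtain ⟨i, hi⟩ := hs ⟨v, hv⟩
    exact ⟨i, congrArg Fin.val hi⟩
  constructor
  · have key : ∀ m, m < n →
        Relation.ReflTransGen (RStep n₀) (fun _ => 0)
          (fun i => if C i ≤ m then C i else 0) := by
      intro m
      induction m with
      | zero =>
        intro _
        have h : (fun i : Fin n => if C i ≤ 0 then C i else 0) = (fun _ => 0) := by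
          funext i
          by_cases h : C i ≤ 0
          · simp [h, Nat.le_zero.mp h]
          · simp [h]
        rw [h]
      | succ m ih =>
        intro hm
        have hm' : m < n := Nat.lt_of_succ_lt hm
        have base := ih hm'
        set F : ℕ → Fin n → ℕ := fun t i =>
          if C i ≤ m then C i else if C i = m + 1 then t else 0 with hF
        have climb : ∀ t, t ≤ m + 1 →
            Relation.ReflTransGen (RStep n₀) (F 0) (F t) := by
          intro t
          induction t with
          | zero => intro _; exact Relation.ReflTransGen.refl
          | succ t iht =>
            intro ht
            have ht' : t ≤ m := Nat.lt_succ_iff.mp ht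
            refine (iht (Nat.le_succ_of_le ht')).tail ?_
            obtain ⟨i, hi⟩ := hsurj t (lt_of_le_of_lt ht' hm')
            obtain ⟨r, hr⟩ := hsurj (m + 1) hm
            have hir : i ≠ r := by
              intro h; rw [h, hr] at hi; omega
            have h1 : F t i = t := by
              simp only [hF]
              rw [if_pos (hi ▸ ht'), hi]
            have h2 : F t r = t := by
              simp only [hF]
              rw [if_neg (by omega), if_pos hr]
            refine ⟨i, r, hir, h1.trans h2.symm, ?_⟩
            have hmin : min (F t i + 1) n₀ = t + 1 := by
              rw [h1]; omega
            funext j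
            by_cases hj : j = r
            · subst hj
              rw [Function.update_self, hmin]
              simp only [hF]
              rw [if_neg (by omega), if_pos hr]
            · rw [Function.update_of_ne hj]
              by_cases hc1 : C j ≤ m
              · simp only [hF]; rw [if_pos hc1, if_pos hc1]
              · by_cases hc2 : C j = m + 1
                · exact absurd (hinj (hc2.trans hr.symm)) hj
                · simp only [hF]
                  rw [if_neg hc1, if_neg hc1, if_neg hc2, if_neg hc2]
        have e0 : F 0 = (fun i => if C i ≤ m then C i else 0) := by
          funext i
          by_cases h1 : C i ≤ m
          · simp only [hF]; rw [if_pos h1, if_pos h1]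
          · simp only [hF]; rw [if_neg h1, if_neg h1]; split <;> rfl
        have e1 : F (m + 1) = (fun i => if C i ≤ m + 1 then C i else 0) := by
          funext i
          by_cases h1 : C i ≤ m
          · simp only [hF]
            rw [if_pos h1, if_pos (Nat.le_succ_of_le h1)]
          · by_cases h2 : C i = m + 1
            · simp only [hF]
              rw [if_neg h1, if_pos h2, if_pos (by omega), h2]
            · simp only [hF]
              rw [if_neg h1, if_neg h2, if_neg (by omega)]
        rw [← e1]
        exact base.trans (e0 ▸ climb (m + 1) le_rfl)
    have hkey := key (n - 1) (by omega)
    have hC : (fun i => if C i ≤ n - 1 then C i else 0) = C := by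
      funext i
      have h := hlt i
      rw [if_pos (by omega)]
    rwa [hC] at hkey
  · intro C' hC'
    obtain ⟨i, r, hir, heq, _⟩ := hC'
    exact absurd (hinj heq) hir
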